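/- Let f and g be two nonnegative even functions on ℝ that are integrable and monotone decreasing on [0,∞). Then for every x ∈ ℝ, |(f ⋆ g)(x)| ≤ f(x/2)·‖g‖₁ + g(x/2)·‖f‖₁, where ⋆ denotes convolution. -/
import Mathlib

open MeasureTheory

lemma even_anti_abs (f : ℝ → ℝ) (hfe : ∀ x, f (-x) = f x)
    (hfm : AntitoneOn f (Set.Ici 0)) {a b : ℝ} (h : |b| ≤ |a|) : f a ≤ f b := by
  have h1 : ∀ t : ℝ, f t = f |t| := by
    intro t
    rcases abs_choice t with ht | ht
    · rw [ht]
    · rw [ht, hfe]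
  rw [h1 a, h1 b]
  exact hfm (Set.mem_Ici.2 (abs_nonneg b)) (Set.mem_Ici.2 (abs_nonneg a)) h

theorem stmt1 (f g : ℝ → ℝ) (hf0 : ∀ x, 0 ≤ f x) (hg0 : ∀ x, 0 ≤ g x)
    (hfe : ∀ x, f (-x) = f x) (hge : ∀ x, g (-x) = g x)
    (hfi : Integrable f) (hgi : Integrable g)
    (hfm : AntitoneOn f (Set.Ici 0)) (hgm : AntitoneOn g (Set.Ici 0)) (x : ℝ) :
    |∫ y, f (x - y) * g y| ≤ f (x / 2) * (∫ y, |g y|) + g (x / 2) * (∫ y, |f y|) := by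
  have habs2 : |x / 2| = |x| / 2 := by
    rw [abs_div]; norm_num
  have key : ∀ y, f (x - y) * g y ≤ f (x / 2) * g y + g (x / 2) * f (x - y) := by
    intro y
    have htri : |x| ≤ |x - y| + |y| := by
      calc |x| = |(x - y) + y| := by ring_nf
        _ ≤ |x - y| + |y| := abs_add_le _ _
    rcases le_or_gt (|x| / 2) (|x - y|) with h | h
    · have hle : f (x - y) ≤ f (x / 2) := even_anti_abs f hfe hfm (by rw [habs2]; exact h)
      calc f (x - y) * g y ≤ f (x / 2) * g y := mul_le_mul_of_nonneg_right hle (hg0 y)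
        _ ≤ _ := le_add_of_nonneg_right (mul_nonneg (hg0 _) (hf0 _))
    · have hy : |x / 2| ≤ |y| := by rw [habs2]; linarith
      have hle : g y ≤ g (x / 2) := even_anti_abs g hge hgm hy
      calc f (x - y) * g y ≤ f (x - y) * g (x / 2) :=
            mul_le_mul_of_nonneg_left hle (hf0 _)
        _ = g (x / 2) * f (x - y) := mul_comm _ _
        _ ≤ _ := le_add_of_nonneg_left (mul_nonneg (hf0 _) (hg0 _))
  have hfint : Integrable (fun y => f (x - y)) := hfi.comp_sub_left x
  have hb1 : Integrable (fun y => f (x / 2) * g y) := hgi.const_mul _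
  have hb2 : Integrable (fun y => g (x / 2) * f (x - y)) := hfint.const_mul _
  have habsfg : ∀ y, |f (x - y) * g y| = f (x - y) * g y := fun y =>
    abs_of_nonneg (mul_nonneg (hf0 _) (hg0 _))
  calc |∫ y, f (x - y) * g y| ≤ ∫ y, |f (x - y) * g y| := by
        simpa only [Real.norm_eq_abs] using
          norm_integral_le_integral_norm (μ := volume) (fun y => f (x - y) * g y)
    _ = ∫ y, f (x - y) * g y := by simp only [habsfg]
    _ ≤ ∫ y, (f (x / 2) * g y + g (x / 2) * f (x - y)) :=
        integral_mono_of_nonneg (ae_of_all _ fun y => mul_nonneg (hf0 _) (hg0 _))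
          (hb1.add hb2) (ae_of_all _ key)
    _ = f (x / 2) * (∫ y, g y) + g (x / 2) * (∫ y, f (x - y)) := by
        rw [integral_add hb1 hb2, integral_const_mul, integral_const_mul]
    _ = f (x / 2) * (∫ y, |g y|) + g (x / 2) * (∫ y, |f y|) := by
        have hsub : (∫ y, f (x - y)) = ∫ y, f y := integral_sub_left_eq_self f volume x
        rw [hsub]
        congr 1
        · congr 1; exact integral_congr_ae (ae_of_all _ fun y => (abs_of_nonneg (hg0 y)).symm)
        · congr 1; exact integral_congr_ae (ae_of_all _ fun y => (abs_of_nonneg (hf0 y)).symm)
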